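/- Let p be an odd positive integer, q a positive integer relatively prime to p, and let ℓ be an even integer with 0 < ℓ < p. Then the real number δ^τ(p;q,ℓ) is an odd integer; that is, there exists an integer m with δ^τ(p;q,ℓ) = 2m + 1. -/

import Mathlib

open Finset Real


lemma sum_cos_eq_neg_one (p n : ℕ) (hp : 0 < p) (hn : ¬ p ∣ n) :
    ∑ j ∈ Icc 1 (p-1), Real.cos (2*Real.pi*n*j/p) = -1 := by
  have hp' : (p:ℝ) ≠ 0 := Nat.cast_ne_zero.mpr hp.ne'
  have hpc : (p:ℂ) ≠ 0 := Nat.cast_ne_zero.mpr hp.ne'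
  set θ : ℝ := 2*Real.pi*n/p with hθ
  set z : ℂ := Complex.exp ((θ:ℂ) * Complex.I) with hz
  have hzp : z ^ p = 1 := by
    rw [hz, ← Complex.exp_nat_mul]
    have : (p:ℂ) * ((θ:ℂ) * Complex.I) = (n:ℤ) * (2*Real.pi*Complex.I) := by
      rw [hθ]; push_cast; field_simp
    rw [this]
    exact Complex.exp_int_mul_two_pi_mul_I n
  have hz1 : z ≠ 1 := by
    intro h
    rw [hz, Complex.exp_eq_one_iff] at h
    obtain ⟨k, hk⟩ := h
    have him : θ = k * (2*Real.pi) := by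
      have h2 : ((θ:ℂ) * Complex.I).im = ((k:ℂ) * (2*Real.pi*Complex.I)).im := by rw [hk]
      simpa using h2
    have hnp : (n:ℝ) = k * p := by
      rw [hθ] at him
      have hpi := Real.pi_ne_zero
      field_simp at him
      nlinarith [Real.pi_pos, him]
    have hnp' : (n:ℝ) = (p:ℝ) * (k:ℝ) := by linear_combination hnp
    have : (p:ℤ) ∣ (n:ℤ) := ⟨k, by exact_mod_cast hnp'⟩
    exact hn (Int.ofNat_dvd.mp (by exact_mod_cast this))
  have hgeom : ∑ j ∈ range p, z ^ j = 0 := by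
    rw [geom_sum_eq hz1, hzp]
    simp
  have hre : ∀ j : ℕ, Real.cos (2*Real.pi*n*j/p) = (z ^ j).re := by
    intro j
    rw [hz, ← Complex.exp_nat_mul]
    have : (j:ℂ) * ((θ:ℂ) * Complex.I) = ((2*Real.pi*n*j/p : ℝ) : ℂ) * Complex.I := by
      rw [hθ]; push_cast; ring
    rw [this, Complex.exp_ofReal_mul_I_re]
  have hsplit : ∑ j ∈ range p, Real.cos (2*Real.pi*n*j/p)
      = Real.cos (2*Real.pi*n*0/p) + ∑ j ∈ Icc 1 (p-1), Real.cos (2*Real.pi*n*j/p) := by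
    have h1 : Icc 1 (p-1) = Ico 1 p := by
      rw [← Finset.Ico_add_one_right_eq_Icc]
      congr 1
      omega
    rw [h1, Finset.range_eq_Ico]
    rw [← Finset.sum_Ico_consecutive _ (by omega : 0 ≤ 1) (by omega : 1 ≤ p)]
    simp
  have h0 : ∑ j ∈ range p, Real.cos (2*Real.pi*n*j/p) = 0 := by
    have := congrArg Complex.re hgeom
    rw [Complex.re_sum] at this
    simp only [← hre] at this
    simpa using this
  rw [h0] at hsplit
  simp only [Nat.cast_zero, mul_zero, zero_div, Real.cos_zero] at hsplit
  linarith


lemma step_id (A x : ℝ) (hx : Real.cos x ≠ 0) :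
    Real.tan x * (Real.sin (A + 2*x) + Real.sin A) + Real.cos (A + 2*x) + Real.cos A = 2 * Real.cos A := by
  rw [Real.sin_add, Real.cos_add, Real.sin_two_mul, Real.cos_two_mul, Real.tan_eq_sin_div_cos]
  field_simp
  linear_combination (2*Real.cos A*Real.cos x) * (Real.sin_sq_add_cos_sq x)

lemma tan_mul_sin (x : ℝ) (hx : Real.cos x ≠ 0) (n : ℕ) :
    Real.tan x * Real.sin (2*(n+1)*x) + Real.cos (2*(n+1)*x)
      = (-1)^n * (1 + 2 * ∑ a ∈ Icc 1 n, (-1:ℝ)^a * Real.cos (2*a*x)) := by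
  induction n with
  | zero =>
      simp only [Nat.cast_zero, zero_add, Icc_self, Icc_eq_empty_of_lt, sum_empty]
      norm_num
      rw [Real.sin_two_mul, Real.cos_two_mul, Real.tan_eq_sin_div_cos]
      field_simp
      linear_combination 2 * (Real.sin_sq_add_cos_sq x)
  | succ n ih =>
      have key := step_id (2*((n:ℝ)+1)*x) x hx
      have h1 : 2*((n:ℝ)+1)*x + 2*x = 2*((n:ℝ)+1+1)*x := by ring
      rw [h1] at key
      have hpow : ((-1:ℝ))^(n*2) = 1 := by rw [mul_comm, pow_mul]; norm_num
      have hs : ∑ a ∈ Icc 1 (n+1), (-1:ℝ)^a * Real.cos (2*a*x)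
          = (∑ a ∈ Icc 1 n, (-1:ℝ)^a * Real.cos (2*a*x)) + (-1)^(n+1) * Real.cos (2*(n+1)*x) := by
        rw [Finset.sum_Icc_succ_top (by omega : 1 ≤ n+1)]
        push_cast; ring
      push_cast
      push_cast at ih key hs
      rw [hs]
      linear_combination key - ih - 2*Real.cos (2*((n:ℝ)+1)*x) * hpow


lemma neg_one_sum (m : ℕ) : ∑ a ∈ Icc 1 m, (-1:ℝ)^a = ((-1)^m - 1)/2 := by
  induction m with
  | zero => simp
  | succ m ih =>
      rw [Finset.sum_Icc_succ_top (by omega : 1 ≤ m+1), ih]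
      rw [pow_succ]
      ring

lemma cos_ne_zero_of (p j : ℕ) (hodd : Odd p) (hj1 : 1 ≤ j) (hjp : j ≤ p - 1) :
    Real.cos (Real.pi * j / p) ≠ 0 := by
  obtain ⟨t, ht⟩ := hodd
  have hp : 0 < p := by omega
  intro h
  rw [Real.cos_eq_zero_iff] at h
  obtain ⟨k, hk⟩ := h
  have hp' : (p:ℝ) ≠ 0 := Nat.cast_ne_zero.mpr hp.ne'
  have hpi := Real.pi_ne_zero
  have h2 : (2*j : ℝ) = (2*k+1) * p := by
    field_simp at hk
    nlinarith [hk, Real.pi_pos]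
  have h3 : (2*j : ℤ) = (2*k+1) * p := by exact_mod_cast h2
  have h4 : ((p:ℤ)) = 2*t+1 := by exact_mod_cast (by omega : p = 2*t+1)
  rw [h4] at h3
  have h5 : (2*(j:ℤ)) = 2*(2*k*t+k+t)+1 := h3.trans (by ring)
  omega


lemma tan_sum (p : ℕ) (hodd : Odd p) (n : ℕ) (hn1 : 1 ≤ n) (hnp : n ≤ p - 1) :
    ∑ j ∈ Icc 1 (p-1), Real.tan (Real.pi*j/p) * Real.sin (2*Real.pi*n*j/p)
      = p * (-1)^(n+1) := by
  have hp : 0 < p := by rcases hodd with ⟨t, ht⟩; omega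
  have hp' : (p:ℝ) ≠ 0 := Nat.cast_ne_zero.mpr hp.ne'
  obtain ⟨m, rfl⟩ : ∃ m, n = m + 1 := ⟨n - 1, by omega⟩
  have hterm : ∀ j ∈ Icc 1 (p-1),
      Real.tan (Real.pi*j/p) * Real.sin (2*Real.pi*((m:ℝ)+1)*j/p)
        = (-1)^m * (1 + 2 * ∑ a ∈ Icc 1 m, (-1:ℝ)^a * Real.cos (2*Real.pi*a*j/p))
          - Real.cos (2*Real.pi*((m:ℝ)+1)*j/p) := by
    intro j hj
    rw [Finset.mem_Icc] at hj
    have hc := cos_ne_zero_of p j hodd hj.1 hj.2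
    have key := tan_mul_sin (Real.pi*j/p) hc m
    have e1 : 2*((m:ℝ)+1)*(Real.pi*j/p) = 2*Real.pi*((m:ℕ)+1:ℕ)*j/p := by push_cast; ring
    have e2 : ∀ a : ℕ, 2*(a:ℝ)*(Real.pi*j/p) = 2*Real.pi*a*j/p := by intro a; ring
    rw [e1] at key
    simp only [e2] at key
    push_cast at key ⊢
    linarith [key]
  push_cast
  rw [Finset.sum_congr rfl hterm]
  rw [Finset.sum_sub_distrib]
  have hcos1 : ∑ j ∈ Icc 1 (p-1), Real.cos (2*Real.pi*((m:ℝ)+1)*j/p) = -1 := by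
    have h := sum_cos_eq_neg_one p (m+1) hp (by intro hd; have := Nat.le_of_dvd (by omega) hd; omega)
    rw [← h]
    refine Finset.sum_congr rfl (fun j hj => ?_)
    norm_num
  have hsum2 : ∑ j ∈ Icc 1 (p-1),
      (-1:ℝ)^m * (1 + 2 * ∑ a ∈ Icc 1 m, (-1:ℝ)^a * Real.cos (2*Real.pi*a*j/p))
      = (-1)^m * ((p-1) + 2 * ∑ a ∈ Icc 1 m, (-1:ℝ)^a * (-1)) := by
    rw [← Finset.mul_sum]
    congr 1
    rw [Finset.sum_add_distrib]
    congr 1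
    · rw [Finset.sum_const, Nat.card_Icc]
      simp only [nsmul_eq_mul, mul_one]
      have h9 : p - 1 + 1 - 1 = p - 1 := by omega
      rw [h9, Nat.cast_sub (by omega : 1 ≤ p), Nat.cast_one]
    · rw [← Finset.mul_sum]
      congr 1
      rw [Finset.sum_comm]
      refine Finset.sum_congr rfl ?_
      intro a ha
      rw [Finset.mem_Icc] at ha
      rw [← Finset.mul_sum]
      congr 1
      exact sum_cos_eq_neg_one p a hp (by intro hd; have := Nat.le_of_dvd (by omega) hd; omega)
  rw [hsum2, hcos1]
  simp only [mul_neg_one]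
  rw [Finset.sum_neg_distrib, neg_one_sum]
  have hsq : ((-1:ℝ))^m * (-1:ℝ)^m = 1 := by
    rw [← pow_add]
    have h2 : m + m = 2*m := by ring
    rw [h2, pow_mul]
    norm_num
  rw [pow_succ, pow_succ]
  linear_combination (-1 : ℝ) * hsq


lemma tan_nat_mod (p a : ℕ) (hp : 0 < p) :
    Real.tan (Real.pi * a / p) = Real.tan (Real.pi * ((a % p : ℕ) : ℝ) / p) := by
  have hp' : (p:ℝ) ≠ 0 := Nat.cast_ne_zero.mpr hp.ne'
  conv_lhs => rw [show (a:ℝ) = ((a % p : ℕ) : ℝ) + ((a / p : ℕ) : ℝ) * p by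
    exact_mod_cast congrArg (Nat.cast : ℕ → ℝ) (Nat.mod_add_div' a p).symm]
  have h : Real.pi * (((a % p : ℕ) : ℝ) + ((a / p : ℕ) : ℝ) * p) / p
      = Real.pi * ((a % p : ℕ) : ℝ) / p + ((a / p : ℕ) : ℝ) * Real.pi := by
    field_simp
  rw [h]
  exact (Real.tan_periodic.nat_mul (a / p)) _

lemma sin_nat_mod (p a : ℕ) (hp : 0 < p) :
    Real.sin (2 * Real.pi * a / p) = Real.sin (2 * Real.pi * ((a % p : ℕ) : ℝ) / p) := by
  have hp' : (p:ℝ) ≠ 0 := Nat.cast_ne_zero.mpr hp.ne'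
  conv_lhs => rw [show (a:ℝ) = ((a % p : ℕ) : ℝ) + ((a / p : ℕ) : ℝ) * p by
    exact_mod_cast congrArg (Nat.cast : ℕ → ℝ) (Nat.mod_add_div' a p).symm]
  have h : 2 * Real.pi * (((a % p : ℕ) : ℝ) + ((a / p : ℕ) : ℝ) * p) / p
      = 2 * Real.pi * ((a % p : ℕ) : ℝ) / p + ((a / p : ℕ) : ℝ) * (2 * Real.pi) := by
    field_simp
  rw [h]
  exact (Real.sin_periodic.nat_mul (a / p)) _


lemma mod_inv_cancel {p q q' : ℕ} (hp1 : 1 < p) (hq' : q * q' % p = 1) (c : ℕ) :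
    (q' * ((q * c) % p)) % p = c % p := by
  have h1 : (q * q') % p = 1 % p := by rw [hq', Nat.one_mod_eq_one.mpr (by omega)]
  calc (q' * ((q * c) % p)) % p = (q' * (q * c)) % p :=
        Nat.ModEq.mul_left q' (Nat.mod_modEq (q * c) p)
    _ = ((q * q') * c) % p := by ring_nf
    _ = (1 * c) % p := Nat.ModEq.mul_right c h1
    _ = c % p := by rw [one_mul]

lemma tan_sum_q (p q q' : ℕ) (hodd : Odd p) (hp1 : 1 < p) (hq' : q * q' % p = 1)
    (m : ℕ) (hm1 : 1 ≤ m) (hmp : m ≤ p - 1) :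
    ∑ k ∈ Icc 1 (p-1), Real.tan (Real.pi * q * k / p) * Real.sin (2 * Real.pi * m * k / p)
      = p * (-1) ^ ((q' * m) % p + 1) := by
  have hp : 0 < p := by omega
  have hq'2 : q' * q % p = 1 := by rwa [mul_comm] at hq'
  set n := (q' * m) % p with hn
  have hmem : ∀ c : ℕ, 1 ≤ c → c ≤ p - 1 → 1 ≤ (q * c) % p ∧ (q * c) % p ≤ p - 1 := by
    intro c hc1 hc2
    constructor
    · by_contra h
      have h0 : (q * c) % p = 0 := by omega
      have h2 := mod_inv_cancel hp1 hq' c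
      rw [h0, Nat.mod_eq_of_lt (show c < p by omega)] at h2
      simp at h2
      omega
    · have := Nat.mod_lt (q * c) hp
      omega
  have hmem' : ∀ c : ℕ, 1 ≤ c → c ≤ p - 1 → 1 ≤ (q' * c) % p ∧ (q' * c) % p ≤ p - 1 := by
    intro c hc1 hc2
    constructor
    · by_contra h
      have h0 : (q' * c) % p = 0 := by omega
      have h2 := mod_inv_cancel hp1 hq'2 c
      rw [h0, Nat.mod_eq_of_lt (show c < p by omega)] at h2
      simp at h2
      omega
    · have := Nat.mod_lt (q' * c) hp
      omega
  have hn1 : 1 ≤ n := (hmem' m hm1 hmp).1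
  have hn2 : n ≤ p - 1 := (hmem' m hm1 hmp).2
  rw [show (∑ k ∈ Icc 1 (p-1), Real.tan (Real.pi * q * k / p) * Real.sin (2 * Real.pi * m * k / p))
      = ∑ j ∈ Icc 1 (p-1), Real.tan (Real.pi * j / p) * Real.sin (2 * Real.pi * n * j / p) from ?_]
  · exact tan_sum p hodd n hn1 hn2
  · refine Finset.sum_nbij' (fun k => (q * k) % p) (fun j => (q' * j) % p) ?_ ?_ ?_ ?_ ?_
    · intro a ha
      rw [Finset.mem_Icc] at ha ⊢
      exact hmem a ha.1 ha.2
    · intro a ha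
      rw [Finset.mem_Icc] at ha ⊢
      exact hmem' a ha.1 ha.2
    · intro a ha
      rw [Finset.mem_Icc] at ha
      show (q' * ((q * a) % p)) % p = a
      rw [mod_inv_cancel hp1 hq' a, Nat.mod_eq_of_lt (by omega)]
    · intro a ha
      rw [Finset.mem_Icc] at ha
      show (q * ((q' * a) % p)) % p = a
      rw [mod_inv_cancel hp1 hq'2 a, Nat.mod_eq_of_lt (by omega)]
    · intro k hk
      rw [Finset.mem_Icc] at hk
      have e1 : Real.tan (Real.pi * q * k / p) = Real.tan (Real.pi * (((q * k) % p : ℕ) : ℝ) / p) := by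
        rw [← tan_nat_mod p (q * k) hp]
        push_cast
        ring_nf
      have e2 : Real.sin (2 * Real.pi * m * k / p)
          = Real.sin (2 * Real.pi * (n : ℝ) * (((q * k) % p : ℕ) : ℝ) / p) := by
        have hmk : (m * k) % p = (n * ((q * k) % p)) % p := by
          have c1 : (n * ((q * k) % p)) % p = (n * (q * k)) % p :=
            Nat.ModEq.mul_left n (Nat.mod_modEq (q * k) p)
          have c2 : (n * (q * k)) % p = ((q' * m) * (q * k)) % p :=
            Nat.ModEq.mul_right (q * k) (Nat.mod_modEq (q' * m) p)
          have c3 : ((q' * m) * (q * k)) % p = ((q * q') * (m * k)) % p := by ring_nf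
          have c4 : ((q * q') * (m * k)) % p = (1 * (m * k)) % p :=
            Nat.ModEq.mul_right (m * k) (show q * q' % p = 1 % p by
              rw [hq', Nat.one_mod_eq_one.mpr (by omega)])
          rw [c1, c2, c3, c4, one_mul]
        have s1 : Real.sin (2 * Real.pi * m * k / p) = Real.sin (2 * Real.pi * ((m * k : ℕ) : ℝ) / p) := by
          congr 1
          push_cast
          ring
        have s2 : Real.sin (2 * Real.pi * ((n * ((q * k) % p) : ℕ) : ℝ) / p)
            = Real.sin (2 * Real.pi * (n : ℝ) * (((q * k) % p : ℕ) : ℝ) / p) := by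
          congr 1
          push_cast
          ring
        rw [s1, sin_nat_mod p (m * k) hp, hmk, ← sin_nat_mod p (n * ((q * k) % p)) hp, s2]
      rw [e1, e2]



-- per-k cotangent/telescoping lemma
section helper

lemma cot_tele' (A x : ℝ) (hx : Real.sin x ≠ 0) :
    Real.cot x * (Real.cos A - Real.cos (A + 2*x)) = Real.sin (A + 2*x) + Real.sin A := by
  rw [Real.sin_add, Real.cos_add, Real.sin_two_mul, Real.cos_two_mul, Real.cot_eq_cos_div_sin]
  field_simp
  linear_combination (-2*Real.cos A*Real.cos x) * (Real.sin_sq_add_cos_sq x)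

lemma cot_sin_sq (x : ℝ) (hx : Real.sin x ≠ 0) (l : ℕ) :
    Real.cot x * Real.sin (l * x) ^ 2
      = (1/2) * ∑ m ∈ range l, (Real.sin (2*((m:ℝ)+1)*x) + Real.sin (2*(m:ℝ)*x)) := by
  have htel : ∑ m ∈ range l, (Real.cos (2*(m:ℝ)*x) - Real.cos (2*((m:ℝ)+1)*x))
      = 1 - Real.cos (2*(l:ℝ)*x) := by
    have h := Finset.sum_range_sub' (fun m : ℕ => Real.cos (2*(m:ℝ)*x)) l
    simp only [Nat.cast_zero, mul_zero, zero_mul, Real.cos_zero] at h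
    rw [← h]
    refine Finset.sum_congr rfl (fun m _ => ?_)
    congr 2
    push_cast
    ring
  have hper : ∀ m ∈ range l, Real.cot x * (Real.cos (2*(m:ℝ)*x) - Real.cos (2*((m:ℝ)+1)*x))
      = Real.sin (2*((m:ℝ)+1)*x) + Real.sin (2*(m:ℝ)*x) := by
    intro m _
    have h := cot_tele' (2*(m:ℝ)*x) x hx
    rw [show 2*(m:ℝ)*x + 2*x = 2*((m:ℝ)+1)*x by ring] at h
    exact h
  have hs : Real.sin ((l:ℝ)*x)^2 = (1 - Real.cos (2*(l:ℝ)*x))/2 := by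
    rw [Real.sin_sq, Real.cos_sq]
    rw [show 2*((l:ℝ)*x) = 2*(l:ℝ)*x by ring]
    ring
  calc Real.cot x * Real.sin ((l:ℝ)*x)^2 = (1/2) * (Real.cot x * (1 - Real.cos (2*(l:ℝ)*x))) := by
        rw [hs]; ring
    _ = (1/2) * (Real.cot x * ∑ m ∈ range l, (Real.cos (2*(m:ℝ)*x) - Real.cos (2*((m:ℝ)+1)*x))) := by
        rw [htel]
    _ = (1/2) * ∑ m ∈ range l, Real.cot x * (Real.cos (2*(m:ℝ)*x) - Real.cos (2*((m:ℝ)+1)*x)) := by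
        rw [Finset.mul_sum]
    _ = (1/2) * ∑ m ∈ range l, (Real.sin (2*((m:ℝ)+1)*x) + Real.sin (2*(m:ℝ)*x)) := by
        rw [Finset.sum_congr rfl hper]

lemma cot_add_pi_div_two (x : ℝ) : Real.cot (x + Real.pi/2) = - Real.tan x := by
  rw [Real.cot_eq_cos_div_sin, Real.tan_eq_sin_div_cos, Real.cos_add_pi_div_two, Real.sin_add_pi_div_two]
  ring

end helper

/-- The modified Casson–Gordon trigonometric sum
`δ^τ(p;q,ℓ) = (2/p) Σ_{k=1}^{p−1} cot(πk/p) · cot(πqk/p + π/2) · sin²(πkℓ/p)`. -/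
noncomputable def deltaTau (p q : ℕ) (l : ℤ) : ℝ :=
  (2 / p) * ∑ k ∈ Finset.Icc 1 (p - 1),
    Real.cot (Real.pi * k / p) * Real.cot (Real.pi * q * k / p + Real.pi / 2) *
      (Real.sin (Real.pi * k * l / p)) ^ 2

theorem deltaTau_is_odd_integer (p q : ℕ) (hp : 0 < p) (hq : 0 < q)
    (hodd : Odd p) (hpq : Nat.Coprime p q)
    (l : ℕ) (hl0 : 0 < l) (hlp : l < p) (hle : Even l) :
    ∃ m : ℤ, deltaTau p q (l : ℤ) = 2 * m + 1 := by
  have hp1 : 1 < p := by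
    rcases hle with ⟨u, hu⟩; omega
  obtain ⟨q', -, hq'⟩ := Nat.exists_mul_mod_eq_one_of_coprime hpq.symm hp1
  have hp' : (p:ℝ) ≠ 0 := Nat.cast_ne_zero.mpr hp.ne'
  set G : ℕ → ℝ := fun m =>
    ∑ k ∈ Icc 1 (p-1), Real.tan (Real.pi * q * k / p) * Real.sin (2 * Real.pi * m * k / p)
    with hG
  have hG0 : G 0 = 0 := by simp [hG]
  have hGm : ∀ m, 1 ≤ m → m ≤ p - 1 → G m = p * (-1:ℝ)^((q'*m) % p + 1) :=
    fun m h1 h2 => tan_sum_q p q q' hodd hp1 hq' m h1 h2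
  -- step 1 : rewrite deltaTau as double sum
  have key : deltaTau p q (l:ℤ) = -(1/p) * ∑ m ∈ range l, (G (m+1) + G m) := by
    rw [deltaTau]
    have hterm : ∀ k ∈ Icc 1 (p-1),
        Real.cot (Real.pi*k/p) * Real.cot (Real.pi*q*k/p + Real.pi/2) * Real.sin (Real.pi*k*((l:ℤ):ℝ)/p)^2
          = -(1/2) * ∑ m ∈ range l,
              (Real.tan (Real.pi*q*k/p) * Real.sin (2*Real.pi*((m:ℝ)+1)*k/p)
                + Real.tan (Real.pi*q*k/p) * Real.sin (2*Real.pi*(m:ℝ)*k/p)) := by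
      intro k hk
      rw [Finset.mem_Icc] at hk
      have hkp : (k:ℝ) < p := by exact_mod_cast (by omega : k < p)
      have hk0 : (0:ℝ) < k := by exact_mod_cast (by omega : 0 < k)
      have hx : Real.sin (Real.pi*k/p) ≠ 0 := by
        refine ne_of_gt (Real.sin_pos_of_pos_of_lt_pi ?_ ?_)
        · positivity
        · rw [div_lt_iff₀ (by positivity : (0:ℝ) < p)]
          nlinarith [Real.pi_pos]
      rw [cot_add_pi_div_two]
      rw [show Real.pi*(k:ℝ)*((l:ℤ):ℝ)/p = (l:ℝ)*(Real.pi*k/p) by push_cast; ring]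
      rw [show Real.cot (Real.pi*(k:ℝ)/p) * -Real.tan (Real.pi*q*k/p) * Real.sin ((l:ℝ)*(Real.pi*k/p))^2
          = -Real.tan (Real.pi*q*k/p) * (Real.cot (Real.pi*(k:ℝ)/p) * Real.sin ((l:ℝ)*(Real.pi*k/p))^2) by ring]
      rw [cot_sin_sq _ hx l]
      have hang : ∑ m ∈ range l,
          (Real.sin (2*((m:ℝ)+1)*(Real.pi*k/p)) + Real.sin (2*(m:ℝ)*(Real.pi*k/p)))
          = ∑ m ∈ range l,
          (Real.sin (2*Real.pi*((m:ℝ)+1)*k/p) + Real.sin (2*Real.pi*(m:ℝ)*k/p)) :=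
        Finset.sum_congr rfl fun m _ => by
          rw [show 2*((m:ℝ)+1)*(Real.pi*(k:ℝ)/p) = 2*Real.pi*((m:ℝ)+1)*k/p by ring,
             show 2*(m:ℝ)*(Real.pi*(k:ℝ)/p) = 2*Real.pi*(m:ℝ)*k/p by ring]
      rw [hang]
      have hfac : ∑ m ∈ range l,
          (Real.tan (Real.pi*q*k/p) * Real.sin (2*Real.pi*((m:ℝ)+1)*k/p)
            + Real.tan (Real.pi*q*k/p) * Real.sin (2*Real.pi*(m:ℝ)*k/p))
          = Real.tan (Real.pi*q*k/p) * ∑ m ∈ range l,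
          (Real.sin (2*Real.pi*((m:ℝ)+1)*k/p) + Real.sin (2*Real.pi*(m:ℝ)*k/p)) := by
        rw [Finset.mul_sum]
        exact Finset.sum_congr rfl fun m _ => by ring
      rw [hfac]
      ring
    rw [Finset.sum_congr rfl hterm, ← Finset.mul_sum, Finset.sum_comm]
    have hinner : ∀ m ∈ range l,
        (∑ k ∈ Icc 1 (p-1),
          (Real.tan (Real.pi*q*k/p) * Real.sin (2*Real.pi*((m:ℝ)+1)*k/p)
            + Real.tan (Real.pi*q*k/p) * Real.sin (2*Real.pi*(m:ℝ)*k/p)))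
        = G (m+1) + G m := by
      intro m _
      rw [Finset.sum_add_distrib]
      congr 1
      · refine Finset.sum_congr rfl (fun k _ => ?_)
        congr 2
        push_cast
        ring
    rw [Finset.sum_congr rfl hinner]
    ring
  -- step 2: evaluate sums
  have hsum1 : ∑ m ∈ range l, G (m+1) = ∑ m ∈ Icc 1 l, G m := by
    rw [← Finset.Ico_add_one_right_eq_Icc, Finset.sum_Ico_eq_sum_range]
    exact Finset.sum_congr rfl (fun m _ => by rw [add_comm])
  have hsum2 : ∑ m ∈ range l, G m = ∑ m ∈ Icc 1 (l-1), G m := by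
    obtain ⟨l', rfl⟩ : ∃ l', l = l'+1 := ⟨l-1, by omega⟩
    rw [Finset.sum_range_succ' G l', hG0, add_zero]
    rw [show l' + 1 - 1 = l' by omega, ← Finset.Ico_add_one_right_eq_Icc, Finset.sum_Ico_eq_sum_range]
    exact Finset.sum_congr rfl (fun m _ => by rw [add_comm])
  have hsplit : ∑ m ∈ range l, (G (m+1) + G m)
      = (∑ m ∈ Icc 1 l, G m) + ∑ m ∈ Icc 1 (l-1), G m := by
    rw [Finset.sum_add_distrib, hsum1, hsum2]
  have hval : ∀ (b : ℕ), b ≤ p - 1 →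
      -(1/(p:ℝ)) * ∑ m ∈ Icc 1 b, G m = ∑ m ∈ Icc 1 b, (-1:ℝ)^((q'*m) % p) := by
    intro b hb
    rw [Finset.mul_sum]
    refine Finset.sum_congr rfl (fun m hm => ?_)
    rw [Finset.mem_Icc] at hm
    rw [hGm m hm.1 (by omega), pow_succ]
    field_simp
  have hdelta : deltaTau p q (l:ℤ)
      = (∑ m ∈ Icc 1 l, (-1:ℝ)^((q'*m) % p)) + ∑ m ∈ Icc 1 (l-1), (-1:ℝ)^((q'*m) % p) := by
    rw [key, hsplit, mul_add, hval l (by omega), hval (l-1) (by omega)]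
  -- step 3: integrality
  obtain ⟨l', rfl⟩ : ∃ l', l = l'+1 := ⟨l-1, by omega⟩
  simp only [Nat.add_sub_cancel] at hdelta
  have hsplit2 : ∑ m ∈ Icc 1 (l'+1), (-1:ℝ)^((q'*m) % p)
      = (∑ m ∈ Icc 1 l', (-1:ℝ)^((q'*m) % p)) + (-1:ℝ)^((q'*(l'+1)) % p) :=
    Finset.sum_Icc_succ_top (by omega) _
  have hcastsum : ∑ m ∈ Icc 1 l', (-1:ℝ)^((q'*m) % p)
      = ((∑ m ∈ Icc 1 l', (-1:ℤ)^((q'*m) % p) : ℤ) : ℝ) := by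
    push_cast
    rfl
  rcases Nat.even_or_odd ((q'*(l'+1)) % p) with he | ho
  · refine ⟨∑ m ∈ Icc 1 l', (-1:ℤ)^((q'*m) % p), ?_⟩
    rw [hdelta, hsplit2, he.neg_one_pow, hcastsum]
    push_cast
    ring
  · refine ⟨(∑ m ∈ Icc 1 l', (-1:ℤ)^((q'*m) % p)) - 1, ?_⟩
    rw [hdelta, hsplit2, ho.neg_one_pow, hcastsum]
    push_cast
    ring
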